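/- Let C = (c_{j−i})_{i,j=0}^{n} be an arbitrary (not necessarily Hermitian) Toeplitz matrix with associated Fourier polynomial f(λ) = Σ_{k=−n}^{n} c_k e^{ikλ}. Then the spectral radius of C is at most 2 · sup_λ |f(λ)|. -/

import Mathlib

set_option maxHeartbeats 1000000

open Complex intervalIntegral Real

lemma exp_int_integral (m : ℤ) :
    (∫ θ in (0:ℝ)..(2*Real.pi), Complex.exp ((m:ℂ) * θ * Complex.I)) =
      if m = 0 then ((2*Real.pi : ℝ) : ℂ) else 0 := by
  split_ifs with h
  · simp [h]
  · have hc : (m:ℂ) * Complex.I ≠ 0 :=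
      mul_ne_zero (by exact_mod_cast h) Complex.I_ne_zero
    have h2 := integral_exp_mul_complex (a := 0) (b := 2*Real.pi) hc
    have h3 : ∀ θ : ℝ, (m:ℂ) * θ * Complex.I = ((m:ℂ) * Complex.I) * θ := by
      intro θ; ring
    simp only [h3]
    rw [h2]
    have : ((m:ℂ) * Complex.I) * ((2*Real.pi : ℝ):ℂ) = (m:ℂ) * (2 * Real.pi * Complex.I) := by
      push_cast; ring
    rw [this, Complex.exp_int_mul_two_pi_mul_I]
    simp

lemma toeplitz_key (n : ℕ) (c : ℤ → ℂ) (v : Fin (n+1) → ℂ) :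
    (∫ θ in (0:ℝ)..(2*Real.pi),
      (∑ k ∈ Finset.Icc (-(n:ℤ)) (n:ℤ), c k * Complex.exp ((k:ℂ) * θ * Complex.I)) *
        ((∑ i, (starRingEnd ℂ) (v i) * Complex.exp (((i:ℤ):ℂ) * θ * Complex.I)) *
          (∑ j, v j * Complex.exp ((-(j:ℤ):ℂ) * θ * Complex.I))))
      = ((2*Real.pi : ℝ):ℂ) *
          ∑ i : Fin (n+1), ∑ j : Fin (n+1), (starRingEnd ℂ) (v i) * c ((j:ℤ) - (i:ℤ)) * v j := by
  have hpt : ∀ θ : ℝ,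
      (∑ k ∈ Finset.Icc (-(n:ℤ)) (n:ℤ), c k * Complex.exp ((k:ℂ) * θ * Complex.I)) *
        ((∑ i, (starRingEnd ℂ) (v i) * Complex.exp (((i:ℤ):ℂ) * θ * Complex.I)) *
          (∑ j, v j * Complex.exp ((-(j:ℤ):ℂ) * θ * Complex.I)))
      = ∑ k ∈ Finset.Icc (-(n:ℤ)) (n:ℤ), ∑ i, ∑ j,
          ((starRingEnd ℂ) (v i) * c k * v j) *
            Complex.exp (((k + (i:ℤ) - (j:ℤ) : ℤ):ℂ) * θ * Complex.I) := by
    intro θ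
    have hBD : (∑ i, (starRingEnd ℂ) (v i) * Complex.exp (((i:ℤ):ℂ) * θ * Complex.I)) *
          (∑ j, v j * Complex.exp ((-(j:ℤ):ℂ) * θ * Complex.I))
        = ∑ i, ∑ j, ((starRingEnd ℂ) (v i) * Complex.exp (((i:ℤ):ℂ) * θ * Complex.I)) *
            (v j * Complex.exp ((-(j:ℤ):ℂ) * θ * Complex.I)) :=
      Finset.sum_mul_sum _ _ _ _
    rw [hBD]
    conv_lhs => rw [Finset.sum_mul]
    refine Finset.sum_congr rfl fun k _ => ?_
    rw [Finset.mul_sum]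
    refine Finset.sum_congr rfl fun i _ => ?_
    rw [Finset.mul_sum]
    refine Finset.sum_congr rfl fun j _ => ?_
    rw [show ((k + (i:ℤ) - (j:ℤ) : ℤ):ℂ) * θ * Complex.I
        = (k:ℂ) * θ * Complex.I + (((i:ℤ):ℂ) * θ * Complex.I + (-(j:ℤ):ℂ) * θ * Complex.I) by
      push_cast; ring]
    rw [Complex.exp_add, Complex.exp_add]
    ring
  have hcont : ∀ (m : ℤ) (a : ℂ),
      IntervalIntegrable (fun θ : ℝ => a * Complex.exp ((m:ℂ) * θ * Complex.I))
        MeasureTheory.volume 0 (2*Real.pi) := by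
    intro m a
    apply Continuous.intervalIntegrable
    fun_prop
  have hint : ∀ (m : ℤ) (a : ℂ),
      (∫ θ in (0:ℝ)..(2*Real.pi), a * Complex.exp ((m:ℂ) * θ * Complex.I))
        = a * (if m = 0 then ((2*Real.pi : ℝ):ℂ) else 0) := by
    intro m a
    rw [intervalIntegral.integral_const_mul, exp_int_integral]
  simp only [hpt]
  rw [intervalIntegral.integral_finset_sum (fun k _ =>
    Continuous.intervalIntegrable (by fun_prop) _ _)]
  have step : ∀ k ∈ Finset.Icc (-(n:ℤ)) (n:ℤ),
      (∫ θ in (0:ℝ)..(2*Real.pi), ∑ i, ∑ j,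
          ((starRingEnd ℂ) (v i) * c k * v j) *
            Complex.exp (((k + (i:ℤ) - (j:ℤ) : ℤ):ℂ) * θ * Complex.I))
      = ∑ i, ∑ j, ((starRingEnd ℂ) (v i) * c k * v j) *
          (if (k + (i:ℤ) - (j:ℤ) : ℤ) = 0 then ((2*Real.pi : ℝ):ℂ) else 0) := by
    intro k _
    rw [intervalIntegral.integral_finset_sum (fun i _ =>
      Continuous.intervalIntegrable (by fun_prop) _ _)]
    refine Finset.sum_congr rfl fun i _ => ?_
    rw [intervalIntegral.integral_finset_sum (fun j _ =>
      Continuous.intervalIntegrable (by fun_prop) _ _)]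
    exact Finset.sum_congr rfl fun j _ => hint _ _
  rw [Finset.sum_congr rfl step, Finset.sum_comm]
  rw [Finset.mul_sum]
  refine Finset.sum_congr rfl fun i _ => ?_
  rw [Finset.sum_comm, Finset.mul_sum]
  refine Finset.sum_congr rfl fun j _ => ?_
  have hij : ∀ x : Fin (n+1), (x:ℤ) ≤ n := by
    intro x
    have := x.isLt
    omega
  rw [Finset.sum_eq_single ((j:ℤ) - (i:ℤ))]
  · rw [if_pos (by ring)]; ring
  · intro k _ hne
    rw [if_neg (by omega)]
    ring
  · intro habs
    exfalso
    apply habs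
    rw [Finset.mem_Icc]
    have h1 := hij i
    have h2 := hij j
    have h3 : (0:ℤ) ≤ (i:ℤ) := Int.natCast_nonneg _
    have h4 : (0:ℤ) ≤ (j:ℤ) := Int.natCast_nonneg _
    omega

/-- For an arbitrary Toeplitz matrix `C = (c_{j−i})` with associated Fourier polynomial
`f(λ) = Σ_{k=−n}^{n} c_k e^{ikλ}`, the spectral radius of `C` is at most `2 · sup_λ |f(λ)|`. -/
theorem toeplitz_spectralRadius_bound (n : ℕ) (c : ℤ → ℂ)
    (C : Matrix (Fin (n + 1)) (Fin (n + 1)) ℂ)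
    (hC : ∀ i j : Fin (n + 1), C i j = c ((j : ℤ) - (i : ℤ)))
    (f : ℝ → ℂ)
    (hf : ∀ l : ℝ, f l = ∑ k ∈ Finset.Icc (-(n : ℤ)) (n : ℤ),
      c k * Complex.exp ((k : ℂ) * (l : ℂ) * Complex.I)) :
    (spectralRadius ℂ C).toReal ≤ 2 * ⨆ l : ℝ, ‖f l‖ := by
  set M := ⨆ l : ℝ, ‖f l‖ with hMdef
  have hfc : Continuous f := by
    rw [show f = fun l : ℝ => ∑ k ∈ Finset.Icc (-(n : ℤ)) (n : ℤ),
      c k * Complex.exp ((k : ℂ) * (l : ℂ) * Complex.I) from funext hf]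
    fun_prop
  have habs_exp : ∀ (k : ℤ) (l : ℝ), ‖Complex.exp ((k:ℂ) * l * Complex.I)‖ = 1 := by
    intro k l
    rw [show (k:ℂ) * l * Complex.I = ((k * l : ℝ) : ℂ) * Complex.I by push_cast; ring,
      Complex.norm_exp_ofReal_mul_I]
  have hbddM : BddAbove (Set.range fun l : ℝ => ‖f l‖) := by
    refine ⟨∑ k ∈ Finset.Icc (-(n:ℤ)) (n:ℤ), ‖c k‖, ?_⟩
    rintro x ⟨l, rfl⟩
    simp only []
    rw [hf]
    refine le_trans (norm_sum_le _ _) (Finset.sum_le_sum fun k _ => ?_)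
    rw [norm_mul, habs_exp, mul_one]
  have hM0 : 0 ≤ M := Real.iSup_nonneg fun l => norm_nonneg _
  have hub : ∀ l, ‖f l‖ ≤ M := fun l => le_ciSup hbddM l
  have hspec : ∀ μ ∈ spectrum ℂ C, ‖μ‖ ≤ 2 * M := by
    intro μ hμ
    rw [← AlgEquiv.spectrum_eq (Matrix.toLinAlgEquiv' (n := Fin (n+1)) (R := ℂ)) C,
      ← Module.End.hasEigenvalue_iff_mem_spectrum] at hμ
    obtain ⟨v, hv⟩ := hμ.exists_hasEigenvector
    have hv0 : v ≠ 0 := hv.right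
    have hCv : C.mulVec v = μ • v := by
      have h := Module.End.HasEigenvector.apply_eq_smul hv
      rwa [Matrix.toLinAlgEquiv'_apply] at h
    set T : ℝ := ∑ i, ‖v i‖ ^ 2 with hTdef
    have hTpos : 0 < T := by
      obtain ⟨i, hi⟩ := Function.ne_iff.mp hv0
      have h1 : 0 < ‖v i‖ ^ 2 := by
        have := norm_pos_iff.mpr hi
        positivity
      exact Finset.sum_pos' (fun i _ => by positivity) ⟨i, Finset.mem_univ i, h1⟩
    have hconjmul : ∀ z : ℂ, (starRingEnd ℂ) z * z = ((‖z‖ ^ 2 : ℝ) : ℂ) := by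
      intro z
      rw [mul_comm, Complex.mul_conj, Complex.normSq_eq_norm_sq]
    have hS : (∑ i : Fin (n+1), ∑ j : Fin (n+1),
        (starRingEnd ℂ) (v i) * c ((j:ℤ) - (i:ℤ)) * v j) = μ * (T:ℂ) := by
      have hrow : ∀ i : Fin (n+1),
          (∑ j : Fin (n+1), (starRingEnd ℂ) (v i) * c ((j:ℤ) - (i:ℤ)) * v j)
            = μ * ((‖v i‖ ^ 2 : ℝ) : ℂ) := by
        intro i
        have h1 : (∑ j : Fin (n+1), (starRingEnd ℂ) (v i) * c ((j:ℤ) - (i:ℤ)) * v j)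
            = (starRingEnd ℂ) (v i) * (C.mulVec v) i := by
          rw [Matrix.mulVec, dotProduct, Finset.mul_sum]
          refine Finset.sum_congr rfl fun j _ => ?_
          rw [hC]
          ring
        rw [h1, hCv, Pi.smul_apply, smul_eq_mul, ← mul_assoc,
          mul_comm ((starRingEnd ℂ) (v i)) μ, mul_assoc, hconjmul]
      rw [Finset.sum_congr rfl fun i _ => hrow i, ← Finset.mul_sum, hTdef]
      push_cast
      ring
    set Q : ℝ → ℂ := fun θ => ∑ j : Fin (n+1),
      v j * Complex.exp ((-(j:ℤ):ℂ) * θ * Complex.I) with hQdef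
    have hQat : ∀ θ : ℝ, (∑ j : Fin (n+1),
        v j * Complex.exp ((-(j:ℤ):ℂ) * θ * Complex.I)) = Q θ := fun θ => rfl
    have hQc : Continuous Q := by rw [hQdef]; fun_prop
    have hconjQ : ∀ θ : ℝ, (∑ i : Fin (n+1),
        (starRingEnd ℂ) (v i) * Complex.exp (((i:ℤ):ℂ) * θ * Complex.I))
          = (starRingEnd ℂ) (Q θ) := by
      intro θ
      rw [hQdef, map_sum]
      refine Finset.sum_congr rfl fun j _ => ?_
      rw [map_mul, ← Complex.exp_conj]
      congr 1
      simp only [map_mul, map_neg, Complex.conj_I, Complex.conj_ofReal, map_intCast]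
      ring_nf
    have hPreal : ∀ θ : ℝ, (starRingEnd ℂ) (Q θ) * Q θ
        = ((‖Q θ‖ ^ 2 : ℝ) : ℂ) := fun θ => hconjmul _
    have hA := toeplitz_key n c v
    simp only [hQat, hconjQ, ← hf] at hA
    have hB := toeplitz_key n (fun k => if k = 0 then (1:ℂ) else 0) v
    have hone : ∀ θ : ℝ, (∑ k ∈ Finset.Icc (-(n:ℤ)) (n:ℤ),
        (if k = 0 then (1:ℂ) else 0) * Complex.exp ((k:ℂ) * θ * Complex.I)) = 1 := by
      intro θ
      rw [Finset.sum_eq_single 0]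
      · simp
      · intro k _ hk; simp [hk]
      · intro h
        exfalso
        apply h
        simp only [Finset.mem_Icc]
        omega
    simp only [hone, one_mul, hQat, hconjQ] at hB
    have hdiag : (∑ i : Fin (n+1), ∑ j : Fin (n+1), (starRingEnd ℂ) (v i) *
        (if ((j:ℤ) - (i:ℤ)) = 0 then (1:ℂ) else 0) * v j) = (T:ℂ) := by
      have hinner : ∀ i : Fin (n+1), (∑ j : Fin (n+1), (starRingEnd ℂ) (v i) *
          (if ((j:ℤ) - (i:ℤ)) = 0 then (1:ℂ) else 0) * v j)
            = ((‖v i‖ ^ 2 : ℝ) : ℂ) := by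
        intro i
        rw [Finset.sum_eq_single i]
        · rw [if_pos (sub_self _), mul_one, hconjmul]
        · intro j _ hji
          have hne : ¬ ((j:ℤ) - (i:ℤ) = 0) := by
            intro h
            apply hji
            have : (j:ℕ) = (i:ℕ) := by omega
            exact Fin.ext this
          simp [hne]
        · intro h; exact absurd (Finset.mem_univ i) h
      rw [Finset.sum_congr rfl fun i _ => hinner i, hTdef]
      push_cast
      ring
    rw [hdiag] at hB
    have hQint : (∫ θ in (0:ℝ)..(2*Real.pi), (‖Q θ‖)^2) = 2*Real.pi*T := by
      have h2 : ((∫ θ in (0:ℝ)..(2*Real.pi), (‖Q θ‖)^2 : ℝ) : ℂ)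
          = ((2*Real.pi*T : ℝ) : ℂ) := by
        have h3 : (∫ θ in (0:ℝ)..(2*Real.pi), ((‖Q θ‖^2 : ℝ) : ℂ))
            = ((∫ θ in (0:ℝ)..(2*Real.pi), ‖Q θ‖^2 : ℝ) : ℂ) :=
          RCLike.intervalIntegral_ofReal
        rw [← h3]
        rw [intervalIntegral.integral_congr (g := fun θ => (starRingEnd ℂ) (Q θ) * Q θ)
          (fun θ _ => (hPreal θ).symm)]
        rw [hB]
        push_cast
        ring
      exact_mod_cast h2
    have hIc : Continuous fun θ : ℝ => (starRingEnd ℂ) (Q θ) * Q θ :=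
      (Complex.continuous_conj.comp hQc).mul hQc
    have hnormb : ‖((2*Real.pi:ℝ):ℂ) * (μ * (T:ℂ))‖ ≤ M * (2*Real.pi*T) := by
      rw [← hS, ← hA]
      calc ‖∫ θ in (0:ℝ)..(2*Real.pi), f θ * ((starRingEnd ℂ) (Q θ) * Q θ)‖
          ≤ ∫ θ in (0:ℝ)..(2*Real.pi), ‖f θ * ((starRingEnd ℂ) (Q θ) * Q θ)‖ :=
            intervalIntegral.norm_integral_le_integral_norm (by positivity)
        _ ≤ ∫ θ in (0:ℝ)..(2*Real.pi), M * (‖Q θ‖)^2 := by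
            refine intervalIntegral.integral_mono_on (by positivity) ?_ ?_ (fun θ _ => ?_)
            · exact ((hfc.mul hIc).norm).intervalIntegrable _ _
            · exact (continuous_const.mul
                ((continuous_norm.comp hQc).pow 2)).intervalIntegrable _ _
            · rw [norm_mul, hPreal θ]
              have h1 : ‖((‖Q θ‖^2 : ℝ):ℂ)‖ = (‖Q θ‖)^2 := by
                rw [Complex.norm_real]
                exact abs_of_nonneg (by positivity)
              rw [h1]
              exact mul_le_mul_of_nonneg_right (hub θ) (by positivity)
        _ = M * (2*Real.pi*T) := by
            rw [intervalIntegral.integral_const_mul, hQint]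
    have hnl : ‖((2*Real.pi:ℝ):ℂ) * (μ * (T:ℂ))‖ = 2*Real.pi * (‖μ‖ * T) := by
      rw [norm_mul, norm_mul, Complex.norm_real, Complex.norm_real,
        Real.norm_eq_abs, Real.norm_eq_abs,
        _root_.abs_of_nonneg (by positivity : (0:ℝ) ≤ 2*Real.pi),
        _root_.abs_of_nonneg hTpos.le]
    rw [hnl] at hnormb
    have hpi := Real.pi_pos
    have hmm : ‖μ‖ * (2*Real.pi*T) ≤ M * (2*Real.pi*T) := by nlinarith [hnormb]
    have hMu : ‖μ‖ ≤ M := le_of_mul_le_mul_right hmm (by positivity)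
    linarith
  have h1 : spectralRadius ℂ C ≤ ENNReal.ofReal (2*M) := by
    refine iSup₂_le fun k hk => ?_
    rw [← ENNReal.ofReal_coe_nnreal, coe_nnnorm]
    exact ENNReal.ofReal_le_ofReal (hspec k hk)
  exact ENNReal.toReal_le_of_le_ofReal (by positivity) h1
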